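/- Let $1\le m\le s$, $k_1,\ldots,k_s\ge 0$ integers and $n\ge\sum_{i\in[s]}k_i$. Suppose $\mathcal{F}_i\subset\binom{[n]}{k_i}$ satisfy $\mu(\mathcal{F}_i)>2k_im/n$ for $i\in[m]$ and $\mu(\mathcal{F}_i)>2k_is/n$ for $i\in[m+1,s]$. Then $\mathcal{F}_1,\ldots,\mathcal{F}_s$ cross contain a matching, i.e., there exist pairwise disjoint sets $A_1,\ldots,A_s$ with $A_i\in\mathcal{F}_i$ for every $i$. -/

import Mathlib

open Finset

namespace Stmt18

variable {n : ℕ}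

/-- prefix count: number of elements of `X` with value `< j`. -/
def pc (X : Finset (Fin n)) (j : ℕ) : ℕ := (X.filter (fun x => x.val < j)).card

lemma pc_zero (X : Finset (Fin n)) : pc X 0 = 0 := by simp [pc]

lemma pc_mono (X : Finset (Fin n)) {j j' : ℕ} (h : j ≤ j') : pc X j ≤ pc X j' := by
  apply card_le_card
  intro x hx
  simp only [mem_filter] at hx ⊢
  exact ⟨hx.1, lt_of_lt_of_le hx.2 h⟩

lemma pc_le_card (X : Finset (Fin n)) (j : ℕ) : pc X j ≤ X.card :=
  card_le_card (filter_subset _ _)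

lemma pc_eq_card (X : Finset (Fin n)) {j : ℕ} (h : n ≤ j) : pc X j = X.card := by
  unfold pc
  congr 1
  apply filter_true_of_mem
  intro x _
  exact lt_of_lt_of_le x.isLt h

lemma filter_val_eq (X : Finset (Fin n)) (x : Fin n) :
    X.filter (fun y => y.val = x.val) = if x ∈ X then {x} else ∅ := by
  split_ifs with h
  · ext y
    simp only [mem_filter, mem_singleton]
    constructor
    · rintro ⟨_, hy⟩; exact Fin.val_injective hy
    · rintro rfl; exact ⟨h, rfl⟩
  · ext y
    simp only [mem_filter, notMem_empty, iff_false]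
    rintro ⟨hy, hv⟩
    exact h (by rwa [show y = x from Fin.val_injective hv] at hy)

lemma pc_succ (X : Finset (Fin n)) (x : Fin n) :
    pc X (x.val + 1) = pc X x.val + (if x ∈ X then 1 else 0) := by
  unfold pc
  have hsplit : X.filter (fun y => y.val < x.val + 1)
      = X.filter (fun y => y.val < x.val) ∪ X.filter (fun y => y.val = x.val) := by
    ext y
    simp only [mem_filter, mem_union]
    by_cases hm : y ∈ X <;> simp [hm] <;> omega
  rw [hsplit, card_union_of_disjoint, filter_val_eq]
  · split_ifs <;> simp
  · rw [disjoint_left]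
    intro y hy hy'
    have h1 := (mem_filter.mp hy).2
    have h2 := (mem_filter.mp hy').2
    omega

lemma pc_succ_le (X : Finset (Fin n)) (j : ℕ) : pc X (j + 1) ≤ pc X j + 1 := by
  by_cases h : j < n
  · have := pc_succ X ⟨j, h⟩
    simp only at this
    rw [this]
    split_ifs <;> omega
  · push_neg at h
    rw [pc_eq_card X h, pc_eq_card X (le_trans h (Nat.le_succ j))]
    omega

lemma pc_ext {X Y : Finset (Fin n)} (h : ∀ j, pc X j = pc Y j) : X = Y := by
  ext x
  have h1 := pc_succ X x
  have h2 := pc_succ Y x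
  rw [h, h] at h1
  rw [h1] at h2
  by_cases hx : x ∈ X <;> by_cases hy : x ∈ Y <;> simp [hx, hy] at h2 ⊢ <;> omega

/-- a family closed under replacing an element by a smaller missing one -/
def Shifted (F : Finset (Finset (Fin n))) : Prop :=
  ∀ u v : Fin n, u < v → ∀ A ∈ F, v ∈ A → u ∉ A → insert u (A.erase v) ∈ F

lemma sum_swap_eq {A : Finset (Fin n)} {u v : Fin n} (hv : v ∈ A) (hu : u ∉ A) :
    (∑ x ∈ insert u (A.erase v), x.val) + v.val = (∑ x ∈ A, x.val) + u.val := by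
  have hne : u ∉ A.erase v := fun h => hu (mem_of_mem_erase h)
  rw [sum_insert hne]
  have h2 : (∑ x ∈ A.erase v, x.val) + v.val = ∑ x ∈ A, x.val := by
    simpa using Finset.sum_erase_add A (fun x => x.val) hv
  omega

lemma card_swap {A : Finset (Fin n)} {u v : Fin n} (hv : v ∈ A) (hu : u ∉ A) :
    (insert u (A.erase v)).card = A.card := by
  have hne : u ∉ A.erase v := fun h => hu (mem_of_mem_erase h)
  rw [card_insert_of_notMem hne, card_erase_of_mem hv]
  have : 1 ≤ A.card := card_pos.mpr ⟨v, hv⟩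
  omega

/-- Key lemma: shifted families are closed under prefix-domination. -/
lemma shifted_down {F : Finset (Finset (Fin n))} (hF : Shifted F) :
    ∀ N (A E : Finset (Fin n)), (∑ x ∈ A, x.val) ≤ N → A ∈ F → E.card = A.card →
    (∀ j, pc A j ≤ pc E j) → E ∈ F := by
  intro N
  induction N using Nat.strong_induction_on with
  | _ N ih =>
  intro A E hsum hA hcard hdom
  by_cases heq : ∀ j, pc A j = pc E j
  · rwa [pc_ext heq] at hA
  · push_neg at heq
    have hex : ∃ j, pc A j < pc E j := by
      obtain ⟨j, hj⟩ := heq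
      exact ⟨j, lt_of_le_of_ne (hdom j) hj⟩
    classical
    set j0 := Nat.find hex with hj0def
    have hj0 : pc A j0 < pc E j0 := Nat.find_spec hex
    have hj0min : ∀ j < j0, pc A j = pc E j := by
      intro j hj
      exact le_antisymm (hdom j) (le_of_not_gt (Nat.find_min hex hj))
    have hj0pos : 1 ≤ j0 := by
      rcases Nat.eq_zero_or_pos j0 with h | h
      · rw [h] at hj0; simp [pc_zero] at hj0
      · exact h
    have hj0n : j0 ≤ n := by
      by_contra h
      push_neg at h
      rw [pc_eq_card A h.le, pc_eq_card E h.le, hcard] at hj0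
      omega
    have hun : j0 - 1 < n := by omega
    set u : Fin n := ⟨j0 - 1, hun⟩ with hudef
    have hprev : pc A (j0 - 1) = pc E (j0 - 1) := hj0min _ (by omega)
    have hpsA := pc_succ A u
    have hpsE := pc_succ E u
    have huval : u.val = j0 - 1 := rfl
    rw [huval, show j0 - 1 + 1 = j0 by omega] at hpsA hpsE
    have hEu : u ∈ E := by
      by_contra h
      simp only [h, if_false, add_zero] at hpsE
      have h2 : pc A (j0 - 1) ≤ pc A j0 := pc_mono _ (by omega)
      omega
    have hAu : u ∉ A := by
      by_contra h
      simp only [h, hEu, if_true] at hpsA hpsE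
      omega
    have hpcAj0 : pc A j0 = pc A (j0 - 1) := by
      simp only [hAu, if_false, add_zero] at hpsA; exact hpsA
    -- choose v: minimal element of A with val ≥ j0
    have hne : (A.filter (fun a => j0 ≤ a.val)).Nonempty := by
      by_contra h
      rw [not_nonempty_iff_eq_empty] at h
      have hAc : pc A j0 = A.card := by
        unfold pc
        congr 1
        apply filter_true_of_mem
        intro x hx
        by_contra hc
        push_neg at hc
        have : x ∈ A.filter (fun a => j0 ≤ a.val) := mem_filter.mpr ⟨hx, by omega⟩
        simp [h] at this
      have h2 : pc E j0 ≤ E.card := pc_le_card _ _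
      omega
    set v := (A.filter (fun a => j0 ≤ a.val)).min' hne with hvdef
    have hvmem : v ∈ A ∧ j0 ≤ v.val := by
      have := min'_mem _ hne
      simpa [mem_filter] using this
    have hvmin : ∀ a ∈ A, j0 ≤ a.val → v.val ≤ a.val := by
      intro a ha hja
      exact min'_le _ _ (mem_filter.mpr ⟨ha, hja⟩)
    have huvlt : u < v := by
      rw [Fin.lt_def, huval]; omega
    set A' := insert u (A.erase v) with hA'def
    have hA' : A' ∈ F := hF u v huvlt A hA hvmem.1 hAu
    have hvu : v ≠ u := fun h => by rw [h] at hvmem; omega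
    -- prefix counts of A'
    have hpcA' : ∀ j, pc A' j ≤ pc E j := by
      intro j
      rcases Nat.lt_or_ge (u.val) j with hj1 | hj1
      · rcases Nat.lt_or_ge (v.val) j with hj2 | hj2
        · -- both u,v < j : pc A' j = pc A j
          have hfe : A'.filter (fun x => x.val < j)
              = insert u ((A.filter (fun x => x.val < j)).erase v) := by
            ext x
            simp only [hA'def, mem_filter, mem_insert, mem_erase]
            constructor
            · rintro ⟨h1 | ⟨h1a, h1b⟩, h2⟩
              · left; exact h1
              · right; exact ⟨h1a, h1b, h2⟩
            · rintro (rfl | ⟨h1, h2, h3⟩)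
              · exact ⟨Or.inl rfl, hj1⟩
              · exact ⟨Or.inr ⟨h1, h2⟩, h3⟩
          have : pc A' j = pc A j := by
            rw [pc, hfe, card_swap (mem_filter.mpr ⟨hvmem.1, hj2⟩)
              (fun h => hAu (mem_of_mem_filter _ h))]
            rfl
          rw [this]; exact hdom j
        · -- u < j ≤ v
          have hj0j : j0 ≤ j := by omega
          have hnomid : pc A j = pc A j0 := by
            refine le_antisymm ?_ (pc_mono _ hj0j)
            unfold pc
            apply card_le_card
            intro x hx
            simp only [mem_filter] at hx ⊢
            refine ⟨hx.1, ?_⟩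
            by_contra hc
            push_neg at hc
            have := hvmin x hx.1 hc
            omega
          have hfe : A'.filter (fun x => x.val < j)
              = insert u (A.filter (fun x => x.val < j)) := by
            ext x
            simp only [hA'def, mem_filter, mem_insert, mem_erase]
            constructor
            · rintro ⟨h1 | ⟨h1a, h1b⟩, h2⟩
              · left; exact h1
              · right; exact ⟨h1b, h2⟩
            · rintro (rfl | ⟨h1, h3⟩)
              · exact ⟨Or.inl rfl, hj1⟩
              · refine ⟨Or.inr ⟨?_, h1⟩, h3⟩
                intro hxv
                rw [hxv] at h3
                omega
          have hun' : u ∉ A.filter (fun x => x.val < j) :=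
            fun h => hAu (mem_of_mem_filter _ h)
          have hA'j : pc A' j = pc A j + 1 := by
            rw [pc, hfe, card_insert_of_notMem hun']
            rfl
          have hEj : pc E j0 ≤ pc E j := pc_mono _ hj0j
          omega
      · -- j ≤ u.val < v.val : filters agree
        have hfe : A'.filter (fun x => x.val < j) = A.filter (fun x => x.val < j) := by
          ext x
          simp only [hA'def, mem_filter, mem_insert, mem_erase]
          constructor
          · rintro ⟨h1 | ⟨h1a, h1b⟩, h2⟩
            · exfalso; rw [h1] at h2; omega
            · exact ⟨h1b, h2⟩
          · rintro ⟨h1, h2⟩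
            refine ⟨Or.inr ⟨?_, h1⟩, h2⟩
            intro hxv
            rw [hxv] at h2
            omega
        have : pc A' j = pc A j := by rw [pc, hfe]; rfl
        rw [this]; exact hdom j
    -- smaller sum
    have hsum' : (∑ x ∈ A', x.val) < ∑ x ∈ A, x.val := by
      rw [hA'def]
      have hswap := sum_swap_eq hvmem.1 hAu
      have hlt : u.val < v.val := huvlt
      omega
    have hcard' : E.card = A'.card := by
      rw [hA'def, card_swap hvmem.1 hAu, hcard]
    rcases Nat.eq_zero_or_pos N with rfl | hN
    · omega
    · exact ih (N - 1) (by omega) A' E (by omega) hA' hcard' hpcA'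

/-- replace v by u in A if possible -/
def swapuv (u v : Fin n) (A : Finset (Fin n)) : Finset (Fin n) :=
  if v ∈ A ∧ u ∉ A then insert u (A.erase v) else A

def comp (u v : Fin n) (F : Finset (Finset (Fin n))) : Finset (Finset (Fin n)) :=
  F.filter (fun A => swapuv u v A ∈ F) ∪
    (F.filter (fun A => swapuv u v A ∉ F)).image (swapuv u v)

variable {u v : Fin n}

lemma swapuv_of_mem {A : Finset (Fin n)} (hv : v ∈ A) (hu : u ∉ A) :
    swapuv u v A = insert u (A.erase v) := by
  unfold swapuv
  rw [if_pos ⟨hv, hu⟩]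

lemma swapuv_of_not {A : Finset (Fin n)} (h : ¬ (v ∈ A ∧ u ∉ A)) : swapuv u v A = A := by
  unfold swapuv
  rw [if_neg h]

lemma mem_swapuv_u (huv : u ≠ v) {A : Finset (Fin n)} (hv : v ∈ A) (hu : u ∉ A) :
    u ∈ swapuv u v A ∧ v ∉ swapuv u v A := by
  rw [swapuv_of_mem hv hu]
  constructor
  · exact mem_insert_self _ _
  · simp only [mem_insert, mem_erase]
    push_neg
    exact ⟨huv.symm, fun h => absurd rfl h⟩

lemma swapuv_back (huv : u ≠ v) {A : Finset (Fin n)} (hv : v ∈ A) (hu : u ∉ A) :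
    insert v ((swapuv u v A).erase u) = A := by
  rw [swapuv_of_mem hv hu]
  ext x
  simp only [mem_insert, mem_erase]
  constructor
  · rintro (rfl | ⟨hx1, hx2 | hx3⟩)
    · exact hv
    · exact absurd hx2 hx1
    · exact hx3.2
  · intro hx
    by_cases hxv : x = v
    · exact Or.inl hxv
    · right
      refine ⟨fun hxu => hu (hxu ▸ hx), Or.inr ⟨hxv, hx⟩⟩

lemma swapuv_moved {A : Finset (Fin n)} (h : swapuv u v A ≠ A) : v ∈ A ∧ u ∉ A := by
  by_contra hc
  exact h (swapuv_of_not hc)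

lemma swapuv_injOn_moved (huv : u ≠ v) {A B : Finset (Fin n)}
    (hA : v ∈ A ∧ u ∉ A) (hB : v ∈ B ∧ u ∉ B) (h : swapuv u v A = swapuv u v B) : A = B := by
  rw [← swapuv_back huv hA.1 hA.2, ← swapuv_back huv hB.1 hB.2, h]

lemma swapuv_card {A : Finset (Fin n)} : (swapuv u v A).card = A.card := by
  by_cases h : v ∈ A ∧ u ∉ A
  · rw [swapuv_of_mem h.1 h.2, card_swap h.1 h.2]
  · rw [swapuv_of_not h]

lemma moved_of_mem_filter {F : Finset (Finset (Fin n))} {A : Finset (Fin n)}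
    (hA : A ∈ F.filter (fun A => swapuv u v A ∉ F)) : v ∈ A ∧ u ∉ A := by
  have h1 := (mem_filter.mp hA).1
  have h2 := (mem_filter.mp hA).2
  apply swapuv_moved
  intro h
  exact h2 (by rwa [h])

lemma comp_injOn (huv : u ≠ v) (F : Finset (Finset (Fin n))) :
    Set.InjOn (swapuv u v) (F.filter (fun A => swapuv u v A ∉ F)) := by
  intro A hA B hB hAB
  exact swapuv_injOn_moved huv (moved_of_mem_filter hA) (moved_of_mem_filter hB) hAB

lemma comp_parts_disjoint (F : Finset (Finset (Fin n))) :
    Disjoint (F.filter (fun A => swapuv u v A ∈ F))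
      ((F.filter (fun A => swapuv u v A ∉ F)).image (swapuv u v)) := by
  rw [disjoint_left]
  intro B hB1 hB2
  obtain ⟨C, hC, hCB⟩ := mem_image.mp hB2
  have := (mem_filter.mp hC).2
  rw [hCB] at this
  exact this (mem_filter.mp hB1).1

lemma mem_comp {F : Finset (Finset (Fin n))} {B : Finset (Fin n)} :
    B ∈ comp u v F ↔ (B ∈ F ∧ swapuv u v B ∈ F) ∨
      (∃ C ∈ F, swapuv u v C ∉ F ∧ swapuv u v C = B) := by
  unfold comp
  rw [mem_union, mem_filter, mem_image]
  constructor
  · rintro (h | ⟨C, hC, hCB⟩)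
    · exact Or.inl h
    · rw [mem_filter] at hC
      exact Or.inr ⟨C, hC.1, hC.2, hCB⟩
  · rintro (h | ⟨C, h1, h2, h3⟩)
    · exact Or.inl h
    · exact Or.inr ⟨C, mem_filter.mpr ⟨h1, h2⟩, h3⟩

lemma comp_card (huv : u ≠ v) (F : Finset (Finset (Fin n))) : (comp u v F).card = F.card := by
  unfold comp
  rw [card_union_of_disjoint (comp_parts_disjoint F),
    card_image_of_injOn (comp_injOn huv F),
    card_filter_add_card_filter_not]

lemma comp_uniform (huv : u ≠ v) {F : Finset (Finset (Fin n))} {kk : ℕ}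
    (hu' : ∀ A ∈ F, A.card = kk) : ∀ B ∈ comp u v F, B.card = kk := by
  intro B hB
  rcases mem_comp.mp hB with h | ⟨C, hC1, _, hC3⟩
  · exact hu' B h.1
  · rw [← hC3, swapuv_card]
    exact hu' C hC1

/-- weight of a family -/
def wt (F : Finset (Finset (Fin n))) : ℕ := ∑ A ∈ F, ∑ x ∈ A, x.val

lemma comp_wt (huv : u ≠ v) (F : Finset (Finset (Fin n))) :
    wt (comp u v F) = (∑ A ∈ F.filter (fun A => swapuv u v A ∈ F), ∑ x ∈ A, x.val)
      + ∑ A ∈ F.filter (fun A => swapuv u v A ∉ F), ∑ x ∈ swapuv u v A, x.val := by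
  unfold comp wt
  rw [sum_union (comp_parts_disjoint F), sum_image (comp_injOn huv F)]

lemma swapuv_wt_lt (hlt : u < v) {A : Finset (Fin n)} (hm : v ∈ A ∧ u ∉ A) :
    (∑ x ∈ swapuv u v A, x.val) < ∑ x ∈ A, x.val := by
  rw [swapuv_of_mem hm.1 hm.2]
  have := sum_swap_eq hm.1 hm.2
  have hlt' : u.val < v.val := hlt
  omega

lemma comp_wt_le (hlt : u < v) (F : Finset (Finset (Fin n))) : wt (comp u v F) ≤ wt F := by
  have hne : u ≠ v := Fin.ne_of_lt hlt
  rw [comp_wt hne]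
  have hsplit := sum_filter_add_sum_filter_not F (fun A => swapuv u v A ∈ F)
    (fun A => ∑ x ∈ A, x.val)
  have hle : ∑ A ∈ F.filter (fun A => swapuv u v A ∉ F), ∑ x ∈ swapuv u v A, x.val
      ≤ ∑ A ∈ F.filter (fun A => swapuv u v A ∉ F), ∑ x ∈ A, x.val := by
    apply sum_le_sum
    intro A hA
    exact le_of_lt (swapuv_wt_lt hlt (moved_of_mem_filter hA))
  unfold wt
  omega

lemma comp_wt_lt (hlt : u < v) {F : Finset (Finset (Fin n))} {A0 : Finset (Fin n)}
    (hA0 : A0 ∈ F) (hm : swapuv u v A0 ∉ F) : wt (comp u v F) < wt F := by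
  have hne : u ≠ v := Fin.ne_of_lt hlt
  rw [comp_wt hne]
  have hsplit := sum_filter_add_sum_filter_not F (fun A => swapuv u v A ∈ F)
    (fun A => ∑ x ∈ A, x.val)
  have hlt2 : ∑ A ∈ F.filter (fun A => swapuv u v A ∉ F), ∑ x ∈ swapuv u v A, x.val
      < ∑ A ∈ F.filter (fun A => swapuv u v A ∉ F), ∑ x ∈ A, x.val := by
    apply sum_lt_sum
    · intro A hA
      exact le_of_lt (swapuv_wt_lt hlt (moved_of_mem_filter hA))
    · exact ⟨A0, mem_filter.mpr ⟨hA0, hm⟩,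
        swapuv_wt_lt hlt (moved_of_mem_filter (mem_filter.mpr ⟨hA0, hm⟩))⟩
  unfold wt
  omega


lemma lift_rainbow {s : ℕ} (u v : Fin n) (huv : u ≠ v) (F : Fin s → Finset (Finset (Fin n)))
    (A : Fin s → Finset (Fin n)) (hA : ∀ i, A i ∈ comp u v (F i))
    (hd : ∀ i j, i ≠ j → Disjoint (A i) (A j)) :
    ∃ B : Fin s → Finset (Fin n), (∀ i, B i ∈ F i) ∧ ∀ i j, i ≠ j → Disjoint (B i) (B j) := by
  classical
  by_cases hall : ∀ i, A i ∈ F i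
  · exact ⟨A, hall, hd⟩
  push_neg at hall
  obtain ⟨i, hi⟩ := hall
  obtain ⟨C, hC1, hC2, hC3⟩ : ∃ C ∈ F i, swapuv u v C ∉ F i ∧ swapuv u v C = A i := by
    rcases mem_comp.mp (hA i) with h | h
    · exact absurd h.1 hi
    · exact h
  have hCm : v ∈ C ∧ u ∉ C := by
    apply swapuv_moved (u := u) (v := v)
    intro h
    rw [h] at hC2
    exact hC2 hC1
  have hui : u ∈ A i ∧ v ∉ A i := hC3 ▸ mem_swapuv_u huv hCm.1 hCm.2
  have hCback : insert v ((A i).erase u) = C := by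
    rw [← hC3]
    exact swapuv_back huv hCm.1 hCm.2
  have hother : ∀ j, j ≠ i → A j ∈ F j := by
    intro j hj
    by_contra hj2
    obtain ⟨C', hC1', hC2', hC3'⟩ : ∃ C' ∈ F j, swapuv u v C' ∉ F j ∧ swapuv u v C' = A j := by
      rcases mem_comp.mp (hA j) with h | h
      · exact absurd h.1 hj2
      · exact h
    have hCm' : v ∈ C' ∧ u ∉ C' := by
      apply swapuv_moved (u := u) (v := v)
      intro h
      rw [h] at hC2'
      exact hC2' hC1'
    have huj : u ∈ A j := hC3' ▸ (mem_swapuv_u huv hCm'.1 hCm'.2).1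
    exact (disjoint_left.mp (hd j i hj)) huj hui.1
  by_cases hv : ∃ j, j ≠ i ∧ v ∈ A j
  · obtain ⟨j, hji, hvj⟩ := hv
    have hAj : A j ∈ F j := hother j hji
    have huj : u ∉ A j := fun h => (disjoint_left.mp (hd j i hji)) h hui.1
    have hD : swapuv u v (A j) ∈ F j := by
      rcases mem_comp.mp (hA j) with h | ⟨C', _, h2, h3⟩
      · exact h.2
      · exact absurd (h3 ▸ hAj) h2
    rw [swapuv_of_mem hvj huj] at hD
    set D := insert u ((A j).erase v) with hDdef
    have hvnl : ∀ l, l ≠ j → v ∉ A l := by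
      intro l hl h
      exact (disjoint_left.mp (hd l j hl)) h hvj
    have hunl : ∀ l, l ≠ i → u ∉ A l := by
      intro l hl h
      exact (disjoint_left.mp (hd l i hl)) h hui.1
    have hCD : Disjoint C D := by
      rw [disjoint_left]
      intro x hx hx'
      rw [← hCback] at hx
      rw [hDdef] at hx'
      simp only [mem_insert, mem_erase] at hx hx'
      rcases hx with rfl | ⟨hx1, hx2⟩
      · rcases hx' with h | h
        · exact huv (h.symm)
        · exact h.1 rfl
      · rcases hx' with rfl | h
        · exact hx1 rfl
        · exact (disjoint_left.mp (hd i j (fun h' => hji h'.symm))) hx2 h.2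
    have hCA : ∀ l, l ≠ i → l ≠ j → Disjoint C (A l) := by
      intro l hl1 hl2
      rw [disjoint_left]
      intro x hx hx'
      rw [← hCback] at hx
      simp only [mem_insert, mem_erase] at hx
      rcases hx with rfl | ⟨_, hx2⟩
      · exact hvnl l hl2 hx'
      · exact (disjoint_left.mp (hd i l (fun h' => hl1 h'.symm))) hx2 hx'
    have hDA : ∀ l, l ≠ i → l ≠ j → Disjoint D (A l) := by
      intro l hl1 hl2
      rw [disjoint_left]
      intro x hx hx'
      rw [hDdef] at hx
      simp only [mem_insert, mem_erase] at hx
      rcases hx with rfl | ⟨_, hx2⟩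
      · exact hunl l hl1 hx'
      · exact (disjoint_left.mp (hd j l (fun h' => hl2 h'.symm))) hx2 hx'
    refine ⟨fun l => if l = i then C else if l = j then D else A l, ?_, ?_⟩
    · intro l
      by_cases h1 : l = i
      · subst h1; simp only [if_pos rfl]; exact hC1
      · by_cases h2 : l = j
        · subst h2; simp only [if_neg h1, if_pos rfl]; exact hD
        · simp only [if_neg h1, if_neg h2]; exact hother l h1
    · intro l l' hll
      dsimp only
      by_cases h1 : l = i
      · rw [if_pos h1]
        by_cases h4 : l' = j
        · rw [if_neg (fun h => hji (h4 ▸ h)), if_pos h4]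
          exact hCD
        · by_cases h2 : l' = i
          · exact absurd (h1.trans h2.symm) hll
          · rw [if_neg h2, if_neg h4]
            exact hCA l' h2 h4
      · by_cases h3 : l = j
        · rw [if_neg h1, if_pos h3]
          by_cases h2 : l' = i
          · rw [if_pos h2]
            exact hCD.symm
          · by_cases h4 : l' = j
            · exact absurd (h3.trans h4.symm) hll
            · rw [if_neg h2, if_neg h4]
              exact hDA l' h2 h4
        · rw [if_neg h1, if_neg h3]
          by_cases h2 : l' = i
          · rw [if_pos h2]
            exact (hCA l h1 h3).symm
          · by_cases h4 : l' = j
            · rw [if_neg h2, if_pos h4]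
              exact (hDA l h1 h3).symm
            · rw [if_neg h2, if_neg h4]
              exact hd l l' hll
  · push_neg at hv
    refine ⟨fun l => if l = i then C else A l, ?_, ?_⟩
    · intro l
      by_cases h1 : l = i
      · subst h1; simp only [if_pos rfl]; exact hC1
      · simp only [if_neg h1]; exact hother l h1
    · intro l l' hll
      dsimp only
      have hCA : ∀ l, l ≠ i → Disjoint C (A l) := by
        intro l hl1
        rw [disjoint_left]
        intro x hx hx'
        rw [← hCback] at hx
        simp only [mem_insert, mem_erase] at hx
        rcases hx with rfl | ⟨_, hx2⟩
        · exact hv l hl1 hx'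
        · exact (disjoint_left.mp (hd i l (fun h' => hl1 h'.symm))) hx2 hx'
      by_cases h1 : l = i
      · rw [if_pos h1]
        by_cases h2 : l' = i
        · exact absurd (h1.trans h2.symm) hll
        · rw [if_neg h2]
          exact hCA l' h2
      · rw [if_neg h1]
        by_cases h2 : l' = i
        · rw [if_pos h2]
          exact (hCA l h1).symm
        · rw [if_neg h2]
          exact hd l l' hll

lemma shift_all {s : ℕ} (k : Fin s → ℕ) :
    ∀ N (F : Fin s → Finset (Finset (Fin n))), (∑ i, wt (F i)) ≤ N →
    (∀ i, ∀ A ∈ F i, A.card = k i) →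
    ∃ G : Fin s → Finset (Finset (Fin n)),
      (∀ i, (G i).card = (F i).card) ∧
      (∀ i, ∀ A ∈ G i, A.card = k i) ∧
      (∀ i, Shifted (G i)) ∧
      (∀ A : Fin s → Finset (Fin n), (∀ i, A i ∈ G i) → (∀ i j, i ≠ j → Disjoint (A i) (A j)) →
        ∃ B : Fin s → Finset (Fin n), (∀ i, B i ∈ F i) ∧ ∀ i j, i ≠ j → Disjoint (B i) (B j)) := by
  intro N
  induction N using Nat.strong_induction_on with
  | _ N ih =>
  intro F hwt hunif
  by_cases hsh : ∀ i, Shifted (F i)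
  · exact ⟨F, fun i => rfl, hunif, hsh, fun A hA hd => ⟨A, hA, hd⟩⟩
  · push_neg at hsh
    obtain ⟨i0, hi0⟩ := hsh
    rw [Shifted] at hi0
    push_neg at hi0
    obtain ⟨u, v, hlt, A0, hA0, hv0, hu0, hnm⟩ := hi0
    have hne : u ≠ v := Fin.ne_of_lt hlt
    have hswap0 : swapuv u v A0 ∉ F i0 := by
      rwa [swapuv_of_mem hv0 hu0]
    have hwt' : ∑ i, wt (comp u v (F i)) < ∑ i, wt (F i) := by
      apply sum_lt_sum
      · intro i _
        exact comp_wt_le hlt (F i)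
      · exact ⟨i0, mem_univ _, comp_wt_lt hlt hA0 hswap0⟩
    obtain ⟨G, hG1, hG2, hG3, hG4⟩ := ih (∑ i, wt (comp u v (F i))) (by omega)
      (fun i => comp u v (F i)) le_rfl (fun i => comp_uniform hne (hunif i))
    refine ⟨G, ?_, hG2, hG3, ?_⟩
    · intro i
      rw [hG1 i, comp_card hne]
    · intro A hA hd
      obtain ⟨B, hB1, hB2⟩ := hG4 A hA hd
      exact lift_rainbow u v hne F B hB1 hB2


section Cycle

variable [NeZero n]
open Fin.NatCast

/-- number of `x < j` (as naturals) whose residue lies in `A` -/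
def cnt (A : Finset (Fin n)) (j : ℕ) : ℕ := ((range j).filter (fun x : ℕ => ((x : Fin n)) ∈ A)).card

/-- `B` is a `q`-good set: every prefix `[0,j)` contains fewer than `j/q` elements. -/
def goodSet (q : ℕ) (B : Finset (Fin n)) : Prop := ∀ j ∈ Icc 1 n, q * pc B j < j

lemma goodSet_iff (q : ℕ) (B : Finset (Fin n)) :
    goodSet q B ↔ ∀ j, 1 ≤ j → j ≤ n → q * pc B j < j := by
  simp [goodSet, mem_Icc, and_imp]

instance goodSetDec (q : ℕ) : DecidablePred (goodSet (n := n) q) := fun _ =>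
  Finset.decidableDforallFinset

def Sf (q : ℕ) (A : Finset (Fin n)) (j : ℕ) : ℤ := (j : ℤ) - q * cnt A j

lemma cnt_zero (A : Finset (Fin n)) : cnt A 0 = 0 := by simp [cnt]

lemma cnt_mono (A : Finset (Fin n)) {j j' : ℕ} (h : j ≤ j') : cnt A j ≤ cnt A j' := by
  apply card_le_card
  intro x hx
  rw [mem_filter] at hx ⊢
  exact ⟨mem_range.mpr (lt_of_lt_of_le (mem_range.mp hx.1) h), hx.2⟩

lemma cnt_succ (A : Finset (Fin n)) (j : ℕ) :
    cnt A (j + 1) = cnt A j + (if ((j : Fin n)) ∈ A then 1 else 0) := by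
  unfold cnt
  rw [range_add_one, filter_insert]
  split_ifs with h
  · rw [card_insert_of_notMem (fun hc => (mem_range.mp (mem_of_mem_filter _ hc)).false)]
  · rw [add_zero]

lemma natCast_inj_of_lt {x y : ℕ} (h : (x : Fin n) = (y : Fin n)) (hxy : x ≤ y)
    (hlt : y - x < n) : x = y := by
  have hval : x % n = y % n := by
    have := congrArg Fin.val h
    simpa [Fin.val_natCast] using this
  have hm : x ≡ y [MOD n] := hval
  have hdvd : n ∣ y - x := (Nat.modEq_iff_dvd' hxy).mp hm
  have := Nat.eq_zero_of_dvd_of_lt hdvd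
  omega

/-- the window identity: counting residues in `[c, c+j)` equals a prefix count of a rotation. -/
lemma cnt_window (A : Finset (Fin n)) (c j : ℕ) (hj : j ≤ n) :
    cnt A (c + j) = cnt A c + pc (A.image (fun a => a - ((c : Fin n)))) j := by
  classical
  have hsplit : range (c + j) = range c ∪ Ico c (c + j) := by
    rw [range_eq_Ico, range_eq_Ico]
    exact (Finset.Ico_union_Ico_eq_Ico (Nat.zero_le c) (Nat.le_add_right c j)).symm
  have hdisj : Disjoint ((range c).filter (fun x : ℕ => ((x : Fin n)) ∈ A))
      ((Ico c (c + j)).filter (fun x : ℕ => ((x : Fin n)) ∈ A)) := by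
    rw [disjoint_left]
    intro x hx hx'
    have h1 := mem_range.mp (mem_of_mem_filter _ hx)
    have h2 := (mem_Ico.mp (mem_of_mem_filter _ hx')).1
    omega
  have h1 : cnt A (c + j) = cnt A c + ((Ico c (c + j)).filter (fun x : ℕ => ((x : Fin n)) ∈ A)).card := by
    unfold cnt
    rw [hsplit, filter_union, card_union_of_disjoint hdisj]
  rw [h1]
  congr 1
  unfold pc
  -- bijection x ↦ (x : Fin n) - c
  apply card_bij (fun (x : ℕ) (_ : x ∈ (Ico c (c + j)).filter (fun x : ℕ => ((x : Fin n)) ∈ A)) => ((x : Fin n)) - ((c : Fin n)))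
  · intro x hx
    rw [mem_filter] at hx
    obtain ⟨hx1, hx2⟩ := hx
    rw [mem_Ico] at hx1
    rw [mem_filter]
    constructor
    · exact mem_image.mpr ⟨_, hx2, rfl⟩
    · have hxe : x = c + (x - c) := by omega
      have hcast : ((x : Fin n)) - ((c : Fin n)) = (((x - c : ℕ)) : Fin n) := by
        conv_lhs => rw [hxe]
        push_cast
        abel
      rw [hcast, Fin.val_natCast]
      have : (x - c) % n = x - c := Nat.mod_eq_of_lt (by omega)
      omega
  · intro x hx y hy hxy
    rw [mem_filter, mem_Ico] at hx hy
    have h : ((x : Fin n)) = ((y : Fin n)) := by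
      have := congrArg (· + ((c : Fin n))) hxy
      simpa [sub_add_cancel] using this
    rcases Nat.le_total x y with hle | hle
    · exact natCast_inj_of_lt h hle (by omega)
    · exact (natCast_inj_of_lt h.symm hle (by omega)).symm
  · intro b hb
    rw [mem_filter] at hb
    obtain ⟨hb1, hb2⟩ := hb
    obtain ⟨a, ha, hab⟩ := mem_image.mp hb1
    refine ⟨c + b.val, mem_filter.mpr ⟨mem_Ico.mpr ⟨Nat.le_add_right _ _, by omega⟩, ?_⟩, ?_⟩
    · have : ((c + b.val : ℕ) : Fin n) = ((c : Fin n)) + b := by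
        rw [Nat.cast_add, Fin.cast_val_eq_self]
      rw [this, ← hab]
      simpa using ha
    · have : ((c + b.val : ℕ) : Fin n) = ((c : Fin n)) + b := by
        rw [Nat.cast_add, Fin.cast_val_eq_self]
      rw [this]
      abel

lemma cnt_add_n (A : Finset (Fin n)) (c : ℕ) : cnt A (c + n) = cnt A c + A.card := by
  rw [cnt_window A c n le_rfl]
  congr 1
  rw [pc_eq_card _ le_rfl, card_image_of_injective]
  intro x y hxy
  simpa using congrArg (· + ((c : Fin n))) hxy

lemma cnt_le_card (A : Finset (Fin n)) {j : ℕ} (hj : j ≤ n) : cnt A j ≤ A.card := by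
  have h := cnt_add_n A 0
  have h2 : cnt A j ≤ cnt A (0 + n) := cnt_mono A (by omega)
  rw [h] at h2
  rw [cnt_zero] at h2
  omega

section FixedA

variable (q : ℕ) (A : Finset (Fin n))

lemma Sf_succ_le (j : ℕ) : Sf q A (j + 1) ≤ Sf q A j + 1 := by
  unfold Sf
  have := cnt_succ A j
  have h2 : cnt A j ≤ cnt A (j+1) := cnt_mono A (by omega)
  push_cast
  have : (cnt A j : ℤ) ≤ cnt A (j+1) := by exact_mod_cast h2
  nlinarith [this]

lemma Sf_zero : Sf q A 0 = 0 := by simp [Sf, cnt_zero]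

lemma Sf_add_n (j : ℕ) : Sf q A (j + n) = Sf q A j + ((n : ℤ) - q * A.card) := by
  unfold Sf
  rw [cnt_add_n]
  push_cast
  ring

lemma Sf_add_mul_n (j c : ℕ) : Sf q A (j + c * n) = Sf q A j + c * ((n : ℤ) - q * A.card) := by
  induction c with
  | zero => simp
  | succ c ihc =>
    have : j + (c + 1) * n = (j + c * n) + n := by ring
    rw [this, Sf_add_n, ihc]
    push_cast
    ring

variable {kk : ℕ} (hk : A.card = kk) (hqk : q * kk < n)

include hk hqk

lemma Sf_lower (j : ℕ) : ((j / n : ℕ) : ℤ) * ((n : ℤ) - q * kk) - q * kk ≤ Sf q A j := by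
  have hj : j = j % n + (j / n) * n := by
    rw [Nat.mod_add_div']
  have h1 : Sf q A j = Sf q A (j % n) + ((j / n : ℕ) : ℤ) * ((n : ℤ) - q * A.card) := by
    conv_lhs => rw [hj]
    rw [Sf_add_mul_n]
  rw [h1, hk]
  have h2 : (0 : ℤ) - q * kk ≤ Sf q A (j % n) := by
    unfold Sf
    have h3 : cnt A (j % n) ≤ kk := by
      rw [← hk]
      exact cnt_le_card A (le_of_lt (Nat.mod_lt _ (Nat.pos_of_ne_zero (NeZero.ne n))))
    have h4 : (cnt A (j % n) : ℤ) ≤ kk := by exact_mod_cast h3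
    have h5 : (0 : ℤ) ≤ (j % n : ℕ) := by positivity
    nlinarith
  nlinarith

lemma Sf_growth {v j : ℕ} (hj : n * (v + q * kk + 1) ≤ j) : (v : ℤ) < Sf q A j := by
  have hn : 0 < n := Nat.pos_of_ne_zero (NeZero.ne n)
  have hdiv : v + q * kk + 1 ≤ j / n := by
    rw [Nat.le_div_iff_mul_le hn, mul_comm]
    exact hj
  have hT : (1 : ℤ) ≤ (n : ℤ) - q * kk := by
    have : (q * kk : ℤ) < n := by exact_mod_cast hqk
    omega
  have hlow := Sf_lower q A hk hqk j
  have hd : (v : ℤ) + (q : ℤ) * (kk : ℤ) + 1 ≤ ((j / n : ℕ) : ℤ) := by exact_mod_cast hdiv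
  have hd0 : (0 : ℤ) ≤ ((j / n : ℕ) : ℤ) := by positivity
  have hprod : ((j / n : ℕ) : ℤ) * 1 ≤ ((j / n : ℕ) : ℤ) * ((n : ℤ) - q * kk) :=
    mul_le_mul_of_nonneg_left hT hd0
  linarith

/-- the greatest time at which the walk is `≤ v`. -/
noncomputable def Jv (v : ℕ) : ℕ :=
  Nat.findGreatest (fun j => Sf q A j ≤ (v : ℤ)) (n * (v + q * A.card + 1))

omit hk hqk

lemma Jv_spec (v : ℕ) : Sf q A (Jv q A v) ≤ (v : ℤ) := by
  unfold Jv
  exact Nat.findGreatest_spec (P := fun j => Sf q A j ≤ (v : ℤ)) (m := 0) (Nat.zero_le _)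
    (by show Sf q A 0 ≤ (v : ℤ); rw [Sf_zero]; positivity)

include hk hqk

lemma Jv_greatest {v j : ℕ} (hj : Jv q A v < j) : (v : ℤ) < Sf q A j := by
  rcases Nat.le_total j (n * (v + q * A.card + 1)) with h | h
  · by_contra hc
    push_neg at hc
    exact Nat.findGreatest_is_greatest hj h hc
  · apply Sf_growth q A hk hqk
    rw [hk] at h
    exact h

lemma Jv_mono {v v' : ℕ} (h : v ≤ v') : Jv q A v ≤ Jv q A v' := by
  apply Nat.le_findGreatest
  · calc Jv q A v ≤ n * (v + q * A.card + 1) := Nat.findGreatest_le _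
      _ ≤ n * (v' + q * A.card + 1) := Nat.mul_le_mul_left _ (by omega)
  · calc Sf q A (Jv q A v) ≤ (v : ℤ) := Jv_spec q A v
      _ ≤ (v' : ℤ) := by exact_mod_cast h

lemma Jv_strict_succ (v : ℕ) : Jv q A v + 1 ≤ Jv q A (v + 1) := by
  apply Nat.le_findGreatest
  · have h1 : Jv q A v ≤ n * (v + q * A.card + 1) := Nat.findGreatest_le _
    have hn : 0 < n := Nat.pos_of_ne_zero (NeZero.ne n)
    have : n * (v + q * A.card + 1) + 1 ≤ n * (v + 1 + q * A.card + 1) := by nlinarith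
    omega
  · calc Sf q A (Jv q A v + 1) ≤ Sf q A (Jv q A v) + 1 := Sf_succ_le q A _
      _ ≤ (v : ℤ) + 1 := by have := Jv_spec q A v; omega
      _ = ((v + 1 : ℕ) : ℤ) := by push_cast; ring

lemma Jv_strict {v v' : ℕ} (h : v < v') : Jv q A v < Jv q A v' := by
  have h1 := Jv_strict_succ q A hk hqk v
  have h2 := Jv_mono q A hk hqk (show v + 1 ≤ v' by omega)
  omega

lemma Jv_period (v : ℕ) : Jv q A (v + (n - q * kk)) = Jv q A v + n := by
  set t := n - q * kk with ht
  have htpos : 1 ≤ t := by omega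
  have hTt : ((n : ℤ) - q * A.card) = (t : ℤ) := by
    rw [hk]
    have : (q * kk : ℤ) < n := by exact_mod_cast hqk
    push_cast
    omega
  apply le_antisymm
  · by_contra hc
    push_neg at hc
    have h1 : Sf q A (Jv q A (v + t)) ≤ ((v + t : ℕ) : ℤ) := Jv_spec q A _
    set j := Jv q A (v + t) with hj
    have hjn : Jv q A v + n < j := hc
    have h2 : Sf q A ((j - n) + n) = Sf q A (j - n) + (t : ℤ) := by
      rw [Sf_add_n, hTt]
    have h3 : (j - n) + n = j := by omega
    rw [h3] at h2
    have h4 : Sf q A (j - n) ≤ (v : ℤ) := by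
      push_cast at h1
      omega
    have h5 := Jv_greatest q A hk hqk (v := v) (j := j - n) (by omega)
    omega
  · apply Nat.le_findGreatest
    · have h1 : Jv q A v ≤ n * (v + q * A.card + 1) := Nat.findGreatest_le _
      have hn : 0 < n := Nat.pos_of_ne_zero (NeZero.ne n)
      have h2 : n * (v + q * A.card + 1) + n ≤ n * (v + t + q * A.card + 1) := by nlinarith
      omega
    · rw [Sf_add_n, hTt]
      have := Jv_spec q A v
      push_cast
      omega

/-- each `Jv` time gives a good rotation -/
lemma good_rotation (v : ℕ) :
    goodSet q (A.image (fun a => a - (((Jv q A v % n : ℕ)) : Fin n))) := by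
  intro j hjmem
  rw [mem_Icc] at hjmem
  obtain ⟨hj1, hjn⟩ := hjmem
  set c := Jv q A v % n with hc
  have hdecomp : Jv q A v = c + (Jv q A v / n) * n := by
    rw [hc, Nat.mod_add_div']
  set d := Jv q A v / n with hd
  -- S (c + j) > S c
  have hgt : Sf q A (c + j) > Sf q A c := by
    have h1 : Sf q A (Jv q A v + j) > (v : ℤ) := Jv_greatest q A hk hqk (by omega)
    have h2 : Sf q A (Jv q A v) ≤ (v : ℤ) := Jv_spec q A v
    have h3 : Sf q A (Jv q A v + j) = Sf q A (c + j) + d * ((n : ℤ) - q * A.card) := by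
      have : Jv q A v + j = (c + j) + d * n := by omega
      rw [this, Sf_add_mul_n]
    have h4 : Sf q A (Jv q A v) = Sf q A c + d * ((n : ℤ) - q * A.card) := by
      conv_lhs => rw [hdecomp]
      rw [Sf_add_mul_n]
    omega
  -- translate to pc
  have hwin := cnt_window A c j hjn
  unfold Sf at hgt
  rw [hwin] at hgt
  push_cast at hgt
  have : (q : ℤ) * pc (A.image (fun a => a - ((c : Fin n)))) j < j := by nlinarith
  exact_mod_cast this

omit hk hqk

/-- per-set count of good rotations -/
lemma count_good_rotations {kk : ℕ} (hk : A.card = kk) (hqk : q * kk < n) :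
    (n - q * kk) ≤ (univ.filter (fun c : Fin n => goodSet q (A.image (fun a => a - c)))).card := by
  classical
  set t := n - q * kk with ht
  have hmap : ∀ v ∈ range t,
      ((((Jv q A v % n : ℕ)) : Fin n)) ∈
        univ.filter (fun c : Fin n => goodSet q (A.image (fun a => a - c))) := by
    intro v _
    rw [mem_filter]
    exact ⟨mem_univ _, good_rotation q A hk hqk v⟩
  have hinj : ∀ v ∈ range t, ∀ v' ∈ range t,
      ((((Jv q A v % n : ℕ)) : Fin n)) = ((((Jv q A v' % n : ℕ)) : Fin n)) → v = v' := by
    intro v hv v' hv' heq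
    rw [mem_range] at hv hv'
    by_contra hne
    -- wlog v < v'
    have key : ∀ w w', w < w' → w' < t →
        ((((Jv q A w % n : ℕ)) : Fin n)) = ((((Jv q A w' % n : ℕ)) : Fin n)) → False := by
      intro w w' hww hw't heq2
      have hlt : Jv q A w < Jv q A w' := Jv_strict q A hk hqk hww
      have hmod : Jv q A w % n = Jv q A w' % n := by
        have hh := congrArg Fin.val heq2
        have hn : 0 < n := Nat.pos_of_ne_zero (NeZero.ne n)
        rwa [Fin.val_cast_of_lt (Nat.mod_lt _ hn), Fin.val_cast_of_lt (Nat.mod_lt _ hn)] at hh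
      have hdvd : n ∣ Jv q A w' - Jv q A w :=
        (Nat.modEq_iff_dvd' hlt.le).mp hmod
      have hge : n ≤ Jv q A w' - Jv q A w :=
        Nat.le_of_dvd (by omega) hdvd
      -- so Jv w' ≥ Jv w + n = Jv (w + t)
      have hper : Jv q A (w + t) = Jv q A w + n := Jv_period q A hk hqk w
      have hge2 : Jv q A (w + t) ≤ Jv q A w' := by omega
      -- strict monotone reflects
      have : w + t ≤ w' := by
        by_contra hcc
        push_neg at hcc
        have := Jv_strict q A hk hqk hcc
        omega
      omega
    rcases Nat.lt_or_ge v v' with h | h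
    · exact key v v' h hv' heq
    · have h2 : v' < v := by omega
      exact key v' v h2 hv heq.symm
  calc t = (range t).card := (card_range t).symm
    _ ≤ _ := card_le_card_of_injOn _ hmap (fun v hv v' hv' h => hinj v hv v' hv' h)

end FixedA

/-- global count: bad sets are few -/
lemma count_good_sets (q kk : ℕ) (hqk : q * kk < n) :
    (n - q * kk) * (powersetCard kk (univ : Finset (Fin n))).card ≤
      n * ((powersetCard kk (univ : Finset (Fin n))).filter (goodSet q)).card := by
  classical
  set 𝒦 := powersetCard kk (univ : Finset (Fin n)) with h𝒦
  have hdouble : ∑ A ∈ 𝒦, (univ.filter (fun c : Fin n => goodSet q (A.image (fun a => a - c)))).card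
      = ∑ c : Fin n, (𝒦.filter (fun A => goodSet q (A.image (fun a => a - c)))).card := by
    simp_rw [card_filter]
    rw [Finset.sum_comm]
  have hfix : ∀ c : Fin n, (𝒦.filter (fun A => goodSet q (A.image (fun a => a - c)))).card
      = (𝒦.filter (goodSet q)).card := by
    intro c
    apply card_bij (fun A _ => A.image (fun a => a - c))
    · intro A hA
      rw [mem_filter] at hA ⊢
      refine ⟨?_, hA.2⟩
      rw [h𝒦, mem_powersetCard_univ] at hA ⊢
      rw [← hA.1]
      apply card_image_of_injective
      intro x y hxy
      simpa using congrArg (· + c) hxy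
    · intro A hA B hB hAB
      have hinj : Function.Injective (fun a : Fin n => a - c) := by
        intro x y hxy
        simpa using congrArg (· + c) hxy
      exact Finset.image_injective hinj hAB
    · intro B hB
      rw [mem_filter] at hB
      refine ⟨B.image (fun a => a + c), ?_, ?_⟩
      · rw [mem_filter]
        have himg : (B.image (fun a => a + c)).image (fun a => a - c) = B := by
          rw [Finset.image_image]
          have : ((fun a : Fin n => a - c) ∘ (fun a => a + c)) = id := by
            funext x
            simp
          rw [this, Finset.image_id]
        constructor
        · rw [h𝒦, mem_powersetCard_univ] at hB ⊢
          rw [← hB.1]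
          apply card_image_of_injective
          intro x y hxy
          simpa using congrArg (· - c) hxy
        · rw [himg]
          exact hB.2
      · rw [Finset.image_image]
        have : ((fun a : Fin n => a - c) ∘ (fun a => a + c)) = id := by
          funext x
          simp
        rw [this, Finset.image_id]
  have hlow : (n - q * kk) * 𝒦.card ≤
      ∑ A ∈ 𝒦, (univ.filter (fun c : Fin n => goodSet q (A.image (fun a => a - c)))).card := by
    rw [mul_comm, ← smul_eq_mul, ← Finset.sum_const]
    apply sum_le_sum
    intro A hA
    have hAk : A.card = kk := by rwa [h𝒦, mem_powersetCard_univ] at hA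
    exact count_good_rotations q A hAk hqk
  rw [hdouble] at hlow
  have : ∑ c : Fin n, (𝒦.filter (fun A => goodSet q (A.image (fun a => a - c)))).card
      = n * (𝒦.filter (goodSet q)).card := by
    rw [Finset.sum_congr rfl (fun c _ => hfix c), Finset.sum_const, card_univ, Fintype.card_fin,
      smul_eq_mul]
  omega

/-- existence of a good set in a dense family -/
lemma exists_good {F : Finset (Finset (Fin n))} {q kk : ℕ}
    (hunif : ∀ A ∈ F, A.card = kk)
    (hdense : q * kk * (n.choose kk) < F.card * n) :
    (q * kk < n) ∧ ∃ A ∈ F, goodSet q A := by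
  classical
  have hkk : kk ≤ n := by
    by_contra hc
    push_neg at hc
    have hF : F = ∅ := by
      rw [eq_empty_iff_forall_notMem]
      intro A hA
      have h1 := hunif A hA
      have h2 := card_le_card (subset_univ A)
      rw [card_univ, Fintype.card_fin] at h2
      omega
    rw [hF] at hdense
    simp at hdense
  set 𝒦 := powersetCard kk (univ : Finset (Fin n)) with h𝒦
  have hC : 𝒦.card = n.choose kk := by
    rw [h𝒦, card_powersetCard, card_univ, Fintype.card_fin]
  have hsub : F ⊆ 𝒦 := by
    intro A hA
    rw [h𝒦, mem_powersetCard_univ]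
    exact hunif A hA
  have hFle : F.card ≤ 𝒦.card := card_le_card hsub
  have hCpos : 0 < n.choose kk := Nat.choose_pos hkk
  have hqk : q * kk < n := by
    have h1 : q * kk * (n.choose kk) < (n.choose kk) * n := by
      calc q * kk * (n.choose kk) < F.card * n := hdense
        _ ≤ (n.choose kk) * n := by
            rw [hC] at hFle
            exact Nat.mul_le_mul_right n hFle
    have h2 : (n.choose kk) * (q * kk) < (n.choose kk) * n := by
      calc (n.choose kk) * (q * kk) = q * kk * (n.choose kk) := by ring
        _ < (n.choose kk) * n := h1
    exact lt_of_mul_lt_mul_left h2 (Nat.zero_le _)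
  refine ⟨hqk, ?_⟩
  have hcountK : (n - q * kk) * 𝒦.card ≤ n * ((𝒦.filter (goodSet q)).card) :=
    count_good_sets q kk hqk
  have hcount : (n - q * kk) * (n.choose kk) ≤ n * ((𝒦.filter (goodSet q)).card) := by
    rw [← hC]
    exact hcountK
  -- bad members of F are at most bad members of 𝒦
  have hbad : (F.filter (fun A => ¬ goodSet q A)).card ≤
      (𝒦.filter (fun A => ¬ goodSet q A)).card :=
    card_le_card (filter_subset_filter _ hsub)
  have hsplitK := card_filter_add_card_filter_not (s := 𝒦) (p := goodSet q)
  have hsplitF := card_filter_add_card_filter_not (s := F) (p := goodSet q)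
  -- n * #(bad in 𝒦) ≤ q*kk*C
  have h3 : n * (𝒦.filter (fun A => ¬ goodSet q A)).card ≤ q * kk * (n.choose kk) := by
    have h4 : (n - q * kk) * (n.choose kk) ≤ n * (𝒦.filter (goodSet q)).card := hcount
    have h5 : n * 𝒦.card = n * (𝒦.filter (goodSet q)).card
        + n * (𝒦.filter (fun A => ¬ goodSet q A)).card := by
      rw [← Nat.mul_add, hsplitK]
    rw [hC] at h5
    nlinarith [Nat.sub_add_cancel (le_of_lt hqk)]
  have h6 : n * (F.filter (fun A => ¬ goodSet q A)).card < n * F.card := by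
    calc n * (F.filter (fun A => ¬ goodSet q A)).card
        ≤ n * (𝒦.filter (fun A => ¬ goodSet q A)).card := Nat.mul_le_mul_left n hbad
      _ ≤ q * kk * (n.choose kk) := h3
      _ < F.card * n := hdense
      _ = n * F.card := by ring
  have h7 : (F.filter (fun A => ¬ goodSet q A)).card < F.card :=
    lt_of_mul_lt_mul_left h6 (Nat.zero_le _)
  have h8 : 0 < (F.filter (goodSet q)).card := by omega
  obtain ⟨A, hA⟩ := card_pos.mp h8
  rw [mem_filter] at hA
  exact ⟨A, hA.1, hA.2⟩

end Cycle


section Staircase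

variable [NeZero n]
open Fin.NatCast

/-- build a staircase set from an increasing position function -/
lemma staircase (kk : ℕ) (f : ℕ → ℕ)
    (hmono : ∀ r r', r < r' → r' < kk → f r < f r')
    (hlt : ∀ r < kk, f r < n) :
    ∃ E : Finset (Fin n), E.card = kk ∧ (∀ x : Fin n, x ∈ E ↔ ∃ r < kk, f r = x.val) ∧
      (∀ j c, 1 ≤ c → c ≤ kk → (∀ r < c, f r < j) → c ≤ pc E j) := by
  classical
  have hproof : ∀ x ∈ (range kk).image f, x < n := by
    intro x hx
    obtain ⟨r, hr, rfl⟩ := mem_image.mp hx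
    exact hlt r (mem_range.mp hr)
  refine ⟨((range kk).image f).attachFin hproof, ?_, ?_, ?_⟩
  · rw [card_attachFin, card_image_of_injOn, card_range]
    intro a ha b hb hab
    rw [mem_coe, mem_range] at ha hb
    by_contra hne
    rcases Nat.lt_or_ge a b with h | h
    · exact absurd hab (Nat.ne_of_lt (hmono a b h hb))
    · have h2 : b < a := by omega
      exact absurd hab.symm (Nat.ne_of_lt (hmono b a h2 ha))
  · intro x
    rw [mem_attachFin]
    constructor
    · intro hx
      obtain ⟨r, hr, hfr⟩ := mem_image.mp hx
      exact ⟨r, mem_range.mp hr, hfr⟩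
    · rintro ⟨r, hr, hfr⟩
      exact mem_image.mpr ⟨r, mem_range.mpr hr, hfr⟩
  · intro j c hc1 hc2 hall
    unfold pc
    have : c = (range c).card := (card_range c).symm
    rw [this]
    apply card_le_card_of_injOn (fun r => ((f r : ℕ) : Fin n))
    · intro r hr
      rw [mem_coe, mem_range] at hr
      have hfr_n : f r < n := hlt r (by omega)
      rw [mem_coe, mem_filter, mem_attachFin, Fin.val_cast_of_lt hfr_n]
      exact ⟨mem_image.mpr ⟨r, mem_range.mpr (by omega), rfl⟩, hall r hr⟩
    · intro a ha b hb hab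
      rw [mem_coe, mem_range] at ha hb
      have hfa : f a < n := hlt a (by omega)
      have hfb : f b < n := hlt b (by omega)
      have : f a = f b := by
        have := congrArg Fin.val hab
        rwa [Fin.val_cast_of_lt hfa, Fin.val_cast_of_lt hfb] at this
      by_contra hne
      rcases Nat.lt_or_ge a b with h | h
      · exact absurd this (Nat.ne_of_lt (hmono a b h (by omega)))
      · have h2 : b < a := by omega
        exact absurd this.symm (Nat.ne_of_lt (hmono b a h2 (by omega)))

/-- a good set prefix-dominates any staircase below it -/
lemma pc_dom {q : ℕ} {Ag E : Finset (Fin n)} (hg : goodSet q Ag) (hcard : E.card = Ag.card)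
    (hE : ∀ j c, 1 ≤ c → c ≤ E.card → q * c < j → c ≤ pc E j) :
    ∀ j, pc Ag j ≤ pc E j := by
  intro j
  rcases Nat.le_total j n with hjn | hjn
  · set c := pc Ag j with hc
    rcases Nat.eq_zero_or_pos c with h0 | h0
    · omega
    · have hj1 : 1 ≤ j := by
        by_contra hj
        push_neg at hj
        interval_cases j
        have := pc_zero Ag
        omega
      have hcle : c ≤ Ag.card := pc_le_card _ _
      have hq : q * c < j := (goodSet_iff q Ag).mp hg j hj1 hjn
      exact hE j c h0 (by omega) hq
  · rw [pc_eq_card Ag hjn, pc_eq_card E hjn, hcard]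

end Staircase


section Positions

/-- second-group position function -/
def g2 (m t : ℕ) : ℕ := m + t + m * (t / m)

lemma g2_mono (m : ℕ) {t t' : ℕ} (h : t < t') : g2 m t < g2 m t' := by
  unfold g2
  have hdiv : t / m ≤ t' / m := Nat.div_le_div_right h.le
  have hmul : m * (t / m) ≤ m * (t' / m) := Nat.mul_le_mul_left m hdiv
  omega

lemma g2_mod (m t : ℕ) (hm : 1 ≤ m) : g2 m t % (2 * m) = m + t % m := by
  have h1 : g2 m t = (m + t % m) + (2 * m) * (t / m) := by
    have h := Nat.div_add_mod t m
    have h2 : (2 * m) * (t / m) = 2 * (m * (t / m)) := by ring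
    unfold g2
    omega
  have h3 : t % m < m := Nat.mod_lt t (by omega)
  rw [h1, Nat.add_mul_mod_self_left, Nat.mod_eq_of_lt (by omega)]

/-- the position of the `r`-th element of the staircase of index `iv` -/
def fpos (m s iv r : ℕ) : ℕ :=
  if iv < m then iv + 2 * m * r else g2 m ((iv - m) + r * (s - m))

/-- the density parameter for index `iv` -/
def qv (m s iv : ℕ) : ℕ := if iv < m then 2 * m else 2 * s

lemma fpos_bound (m s iv r : ℕ) (hm : 1 ≤ m) (hs : iv < s) :
    fpos m s iv r < qv m s iv * (r + 1) := by
  unfold fpos qv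
  by_cases him : iv < m
  · rw [if_pos him, if_pos him]
    calc iv + 2 * m * r < 2 * m + 2 * m * r := Nat.add_lt_add_right (by omega) _
      _ = 2 * m * (r + 1) := by ring
  · rw [if_neg him, if_neg him]
    have hmi : m ≤ iv := by omega
    set d := s - m with hd
    have hd1 : 1 ≤ d := by omega
    set e := iv - m with he
    have hed : e < d := by omega
    set t := e + r * d with ht
    have h1 : g2 m t ≤ m + 2 * t := by
      unfold g2
      have h2 : (t / m) * m ≤ t := Nat.div_mul_le_self t m
      have h3 : m * (t / m) = (t / m) * m := Nat.mul_comm _ _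
      omega
    have h2 : t + 1 ≤ d + r * d := by omega
    have h3 : 2 * s * (r + 1) = 2 * m + 2 * (r * d) + 2 * d + 2 * (m * r) := by
      have hsd : s = m + d := by omega
      rw [hsd]; ring
    have h6 : g2 m t < 2 * m + 2 * (r * d) + 2 * d := by omega
    calc g2 m t < 2 * m + 2 * (r * d) + 2 * d := h6
      _ ≤ 2 * m + 2 * (r * d) + 2 * d + 2 * (m * r) := Nat.le_add_right _ _
      _ = 2 * s * (r + 1) := h3.symm

lemma fpos_mono (m s iv : ℕ) (hm : 1 ≤ m) (hs : iv < s) {r r' : ℕ} (h : r < r') :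
    fpos m s iv r < fpos m s iv r' := by
  unfold fpos
  by_cases him : iv < m
  · rw [if_pos him, if_pos him]
    have : 2 * m * r < 2 * m * r' := Nat.mul_lt_mul_of_pos_left h (by omega)
    omega
  · rw [if_neg him, if_neg him]
    apply g2_mono
    have hd1 : 1 ≤ s - m := by omega
    have : r * (s - m) < r' * (s - m) := Nat.mul_lt_mul_of_pos_right h (by omega)
    omega

lemma fpos_mod1 (m s iv r : ℕ) (him : iv < m) : fpos m s iv r % (2 * m) = iv := by
  unfold fpos
  rw [if_pos him, Nat.add_mul_mod_self_left, Nat.mod_eq_of_lt (by omega)]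

lemma fpos_inj (m s iv jv r r' : ℕ) (hm : 1 ≤ m) (hiv : iv < s) (hjv : jv < s)
    (hne : iv ≠ jv) : fpos m s iv r ≠ fpos m s jv r' := by
  intro heq
  by_cases him : iv < m <;> by_cases hjm : jv < m
  · -- both group 1
    have h1 := fpos_mod1 m s iv r him
    have h2 := fpos_mod1 m s jv r' hjm
    rw [heq] at h1
    omega
  · -- iv group1, jv group2
    have h1 := fpos_mod1 m s iv r him
    have h2 : fpos m s jv r' % (2 * m) = m + ((jv - m) + r' * (s - m)) % m := by
      unfold fpos
      rw [if_neg hjm]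
      exact g2_mod m _ hm
    rw [heq] at h1
    rw [h2] at h1
    omega
  · -- iv group2, jv group1
    have h1 := fpos_mod1 m s jv r' hjm
    have h2 : fpos m s iv r % (2 * m) = m + ((iv - m) + r * (s - m)) % m := by
      unfold fpos
      rw [if_neg him]
      exact g2_mod m _ hm
    rw [← heq] at h1
    rw [h2] at h1
    omega
  · -- both group 2
    have hd1 : 1 ≤ s - m := by omega
    have heq2 : (iv - m) + r * (s - m) = (jv - m) + r' * (s - m) := by
      by_contra hne2
      unfold fpos at heq
      rw [if_neg him, if_neg hjm] at heq
      rcases Nat.lt_or_ge ((iv - m) + r * (s - m)) ((jv - m) + r' * (s - m)) with h | h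
      · exact absurd heq (Nat.ne_of_lt (g2_mono m h))
      · have h2 : (jv - m) + r' * (s - m) < (iv - m) + r * (s - m) := by omega
        exact absurd heq.symm (Nat.ne_of_lt (g2_mono m h2))
    have h1 : ((iv - m) + r * (s - m)) % (s - m) = iv - m := by
      rw [Nat.add_mul_mod_self_right, Nat.mod_eq_of_lt (by omega)]
    have h2 : ((jv - m) + r' * (s - m)) % (s - m) = jv - m := by
      rw [Nat.add_mul_mod_self_right, Nat.mod_eq_of_lt (by omega)]
    rw [heq2] at h1
    omega

end Positions

end Stmt18

open Stmt18 in
theorem stmt18 {n s : ℕ} (m : ℕ) (hm1 : 1 ≤ m) (hms : m ≤ s)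
    (k : Fin s → ℕ) (hn : ∑ i, k i ≤ n)
    (𝓕 : Fin s → Finset (Finset (Fin n)))
    (hunif : ∀ i, ∀ A ∈ 𝓕 i, A.card = k i)
    (hdense1 : ∀ i : Fin s, (i : ℕ) < m →
      (2 : ℝ) * k i * m / n < ((𝓕 i).card : ℝ) / (n.choose (k i)))
    (hdense2 : ∀ i : Fin s, m ≤ (i : ℕ) →
      (2 : ℝ) * k i * s / n < ((𝓕 i).card : ℝ) / (n.choose (k i))) :
    ∃ A : Fin s → Finset (Fin n), (∀ i, A i ∈ 𝓕 i) ∧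
      ∀ i j, i ≠ j → Disjoint (A i) (A j) := by
  classical
  have hksum : ∀ i, k i ≤ n := fun i =>
    le_trans (Finset.single_le_sum (f := k) (fun _ _ => Nat.zero_le _) (mem_univ i)) hn
  have hpos : ∀ i, 0 < (𝓕 i).card := by
    intro i
    by_contra h
    push_neg at h
    have h0 : (𝓕 i).card = 0 := by omega
    by_cases him : i.val < m
    · have hd := hdense1 i him
      rw [h0] at hd
      simp only [Nat.cast_zero, zero_div] at hd
      have : (0 : ℝ) ≤ 2 * (k i) * m / (n : ℝ) := by positivity
      linarith
    · have hd := hdense2 i (le_of_not_gt him)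
      rw [h0] at hd
      simp only [Nat.cast_zero, zero_div] at hd
      have : (0 : ℝ) ≤ 2 * (k i) * s / (n : ℝ) := by positivity
      linarith
  rcases Nat.eq_zero_or_pos n with hn0 | hnpos
  · -- n = 0 : all k i = 0 and ∅ ∈ 𝓕 i
    subst hn0
    have hk0 : ∀ i, k i = 0 := fun i => by have := hksum i; omega
    refine ⟨fun _ => ∅, fun i => ?_, fun i j _ => disjoint_empty_left _⟩
    obtain ⟨A, hA⟩ := card_pos.mp (hpos i)
    have hA0 : A.card = 0 := (hunif i A hA).trans (hk0 i)
    rw [card_eq_zero] at hA0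
    rwa [← hA0]
  haveI : NeZero n := ⟨by omega⟩
  -- natural-number density
  have hQ : ∀ i, qv m s i.val * k i * (n.choose (k i)) < (𝓕 i).card * n := by
    intro i
    have hch : (0 : ℝ) < ((n.choose (k i) : ℕ) : ℝ) := by
      exact_mod_cast Nat.choose_pos (hksum i)
    have hnR : (0 : ℝ) < (n : ℝ) := by exact_mod_cast hnpos
    by_cases him : i.val < m
    · have hd := hdense1 i him
      rw [div_lt_div_iff₀ hnR hch] at hd
      have hN : 2 * k i * m * (n.choose (k i)) < (𝓕 i).card * n := by exact_mod_cast hd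
      have he : qv m s i.val * k i * (n.choose (k i))
          = 2 * k i * m * (n.choose (k i)) := by
        unfold qv
        rw [if_pos him]
        ring
      omega
    · have hd := hdense2 i (le_of_not_gt him)
      rw [div_lt_div_iff₀ hnR hch] at hd
      have hN : 2 * k i * s * (n.choose (k i)) < (𝓕 i).card * n := by exact_mod_cast hd
      have he : qv m s i.val * k i * (n.choose (k i))
          = 2 * k i * s * (n.choose (k i)) := by
        unfold qv
        rw [if_neg him]
        ring
      omega
  -- shift the family
  obtain ⟨G, hGcard, hGunif, hGshift, hGlift⟩ :=
    shift_all (n := n) k (∑ i, wt (𝓕 i)) 𝓕 le_rfl hunif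
  have hQG : ∀ i, qv m s i.val * k i * (n.choose (k i)) < (G i).card * n := by
    intro i
    rw [hGcard i]
    exact hQ i
  have hgood : ∀ i : Fin s, qv m s i.val * k i < n ∧
      ∃ A ∈ G i, goodSet (qv m s i.val) A :=
    fun i => exists_good (hGunif i) (hQG i)
  have hgood2 : ∀ i : Fin s, ∃ A, A ∈ G i ∧ goodSet (qv m s i.val) A := by
    intro i
    obtain ⟨A, h1, h2⟩ := (hgood i).2
    exact ⟨A, h1, h2⟩
  choose Ag hAgmem hAggood using hgood2
  -- staircase sets
  have hfn : ∀ i : Fin s, ∀ r < k i, fpos m s i.val r < n := by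
    intro i r hr
    have h1 := fpos_bound m s i.val r hm1 i.isLt
    have h2 : qv m s i.val * (r + 1) ≤ qv m s i.val * k i :=
      Nat.mul_le_mul_left _ (by omega)
    exact (lt_of_lt_of_le h1 h2).trans (hgood i).1
  have hstair := fun i : Fin s => staircase (n := n) (k i) (fpos m s i.val)
    (fun r r' h _ => fpos_mono m s i.val hm1 i.isLt h) (hfn i)
  choose E hEcard hEmem hEpc using hstair
  -- E i belongs to G i
  have hEmemG : ∀ i, E i ∈ G i := by
    intro i
    have hAgcard : (Ag i).card = k i := hGunif i (Ag i) (hAgmem i)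
    apply shifted_down (hGshift i) (∑ x ∈ Ag i, x.val) (Ag i) (E i) le_rfl (hAgmem i)
    · rw [hEcard i, hAgcard]
    · apply pc_dom (hAggood i)
      · rw [hEcard i, hAgcard]
      · intro j c hc1 hc2 hqc
        apply hEpc i j c hc1
        · rw [hEcard i] at hc2
          exact hc2
        · intro r hr
          have h1 := fpos_bound m s i.val r hm1 i.isLt
          have h2 : qv m s i.val * (r + 1) ≤ qv m s i.val * c :=
            Nat.mul_le_mul_left _ (by omega)
          exact (lt_of_lt_of_le h1 h2).trans hqc
  -- disjointness
  have hdisj : ∀ i j : Fin s, i ≠ j → Disjoint (E i) (E j) := by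
    intro i j hij
    rw [disjoint_left]
    intro x hxi hxj
    obtain ⟨r, hr, hfr⟩ := (hEmem i x).mp hxi
    obtain ⟨r', hr', hfr'⟩ := (hEmem j x).mp hxj
    have heq : fpos m s i.val r = fpos m s j.val r' := by rw [hfr, hfr']
    have hne : i.val ≠ j.val := fun h => hij (Fin.ext h)
    exact fpos_inj m s i.val j.val r r' hm1 i.isLt j.isLt hne heq
  exact hGlift E hEmemG hdisj
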